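/- If there exist nonnegative real numbers c_{aa}, c_{ii}, c_{ia} such that c_a = c_{aa} + Σ_{i∈N(a)} c_{ia} and c_i = c_{ii} − Σ_{a∈N(i)} c_{ia}, then the generalized free energy F(b) = −Σ_a ∫ b_a ln f_a − Σ_a c_a H_a(b) − Σ_i c_i H_i(b) is convex in the beliefs (b_a, b_i), where H_a(b) = −∫ b_a ln b_a and H_i(b) = −∫ b_i ln b_i, under the marginalization constraints b_i(x_i) = ∫ b_a dx_a\x_i. -/

import Mathlib

open Real Finset

lemma logsum2 {a b c d : ℝ} (ha : 0 < a) (hb : 0 < b) (hc : 0 < c) (hd : 0 < d) :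
    (a + b) * Real.log ((a + b) / (c + d)) ≤ a * Real.log (a / c) + b * Real.log (b / d) := by
  have hcd : 0 < c + d := by linarith
  have key := Real.convexOn_mul_log.2 (Set.mem_Ici.2 (le_of_lt (div_pos ha hc)))
    (Set.mem_Ici.2 (le_of_lt (div_pos hb hd)))
    (le_of_lt (div_pos hc hcd)) (le_of_lt (div_pos hd hcd))
    (by rw [← add_div, div_self (ne_of_gt hcd)])
  simp only [smul_eq_mul] at key
  have h1 : c / (c + d) * (a / c) + d / (c + d) * (b / d) = (a + b) / (c + d) := by
    field_simp
  rw [h1] at key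
  have key2 := mul_le_mul_of_nonneg_left key (le_of_lt hcd)
  calc (a + b) * Real.log ((a + b) / (c + d))
      = (c + d) * ((a + b) / (c + d) * Real.log ((a + b) / (c + d))) := by
        field_simp
    _ ≤ (c + d) * (c / (c + d) * (a / c * Real.log (a / c)) +
          d / (c + d) * (b / d * Real.log (b / d))) := key2
    _ = a * Real.log (a / c) + b * Real.log (b / d) := by
        field_simp

lemma key_ineq {p q P Q t : ℝ} (hp : 0 < p) (hq : 0 < q) (hP : 0 < P) (hQ : 0 < Q)
    (ht : 0 < t) (ht1 : t < 1) :
    (t * p + (1 - t) * q) * Real.log (t * p + (1 - t) * q)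
      - (t * p + (1 - t) * q) * Real.log (t * P + (1 - t) * Q)
      ≤ t * (p * Real.log p - p * Real.log P)
        + (1 - t) * (q * Real.log q - q * Real.log Q) := by
  have hs : 0 < 1 - t := by linarith
  have h := logsum2 (mul_pos ht hp) (mul_pos hs hq) (mul_pos ht hP) (mul_pos hs hQ)
  have e1 : t * p / (t * P) = p / P := by field_simp
  have e2 : (1 - t) * q / ((1 - t) * Q) = q / Q := by field_simp
  rw [e1, e2] at h
  have hm : 0 < t * p + (1 - t) * q := by positivity
  have hM : 0 < t * P + (1 - t) * Q := by positivity
  rw [Real.log_div (ne_of_gt hm) (ne_of_gt hM), Real.log_div (ne_of_gt hp) (ne_of_gt hP),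
    Real.log_div (ne_of_gt hq) (ne_of_gt hQ)] at h
  nlinarith [h]

lemma mullog_conv {p q t : ℝ} (hp : 0 ≤ p) (hq : 0 ≤ q) (ht : 0 ≤ t) (ht1 : t ≤ 1) :
    (t * p + (1 - t) * q) * Real.log (t * p + (1 - t) * q)
      ≤ t * (p * Real.log p) + (1 - t) * (q * Real.log q) := by
  have := Real.convexOn_mul_log.2 (Set.mem_Ici.2 hp) (Set.mem_Ici.2 hq) ht
    (show (0:ℝ) ≤ 1 - t by linarith) (show t + (1 - t) = 1 by ring)
  simpa [smul_eq_mul] using this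

/-- Proposition 1 (finite-state version). Factor nodes `A` with neighbor sets `N a ⊆ V`,
variable nodes `V` (neighbor sets `M i ⊆ A`), positive factors `f a`, and counting
numbers `cA a = caa a + ∑_{i ∈ N a} cia i a`, `cV i = cii i − ∑_{a ∈ M i} cia i a` with
`caa, cii, cia ≥ 0`. Then the generalized free energy
`F(b) = −∑_a ∑_x b_a(x) ln f_a(x) − ∑_a cA a · H_a(b) − ∑_i cV i · H_i(b)`
is convex on positive beliefs satisfying the marginalization constraints
`b_i(s) = ∑_{x : x i = s} b_a(x)` for `i ∈ N a`. -/
theorem generalized_free_energy_convex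
    {A V S : Type*} [Fintype A] [Fintype V] [Fintype S] [DecidableEq V] [DecidableEq S]
    (N : A → Finset V) (M : V → Finset A) (hNM : ∀ a i, i ∈ N a ↔ a ∈ M i)
    (f : A → (V → S) → ℝ) (hf : ∀ a x, 0 < f a x)
    (caa : A → ℝ) (cii : V → ℝ) (cia : V → A → ℝ)
    (hcaa : ∀ a, 0 ≤ caa a) (hcii : ∀ i, 0 ≤ cii i) (hcia : ∀ i a, 0 ≤ cia i a)
    (cA : A → ℝ) (cV : V → ℝ)
    (hcA : ∀ a, cA a = caa a + ∑ i ∈ N a, cia i a)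
    (hcV : ∀ i, cV i = cii i - ∑ a ∈ M i, cia i a)
    (F : (A → (V → S) → ℝ) → (V → S → ℝ) → ℝ)
    (hF : ∀ ba bi, F ba bi =
      -(∑ a, ∑ x, ba a x * Real.log (f a x))
        - ∑ a, cA a * -(∑ x, ba a x * Real.log (ba a x))
        - ∑ i, cV i * -(∑ s, bi i s * Real.log (bi i s)))
    (ba₀ ba₁ : A → (V → S) → ℝ) (bi₀ bi₁ : V → S → ℝ)
    (hpos₀a : ∀ a x, 0 < ba₀ a x) (hpos₁a : ∀ a x, 0 < ba₁ a x)
    (hpos₀i : ∀ i s, 0 < bi₀ i s) (hpos₁i : ∀ i s, 0 < bi₁ i s)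
    (hnorm₀ : ∀ a, ∑ x, ba₀ a x = 1) (hnorm₁ : ∀ a, ∑ x, ba₁ a x = 1)
    (hnorm₀i : ∀ i, ∑ s, bi₀ i s = 1) (hnorm₁i : ∀ i, ∑ s, bi₁ i s = 1)
    (hmarg₀ : ∀ a, ∀ i ∈ N a, ∀ s,
      bi₀ i s = ∑ x ∈ Finset.univ.filter (fun x => x i = s), ba₀ a x)
    (hmarg₁ : ∀ a, ∀ i ∈ N a, ∀ s,
      bi₁ i s = ∑ x ∈ Finset.univ.filter (fun x => x i = s), ba₁ a x)
    (t : ℝ) (ht₀ : 0 ≤ t) (ht₁ : t ≤ 1) :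
    F (fun a x => t * ba₁ a x + (1 - t) * ba₀ a x)
        (fun i s => t * bi₁ i s + (1 - t) * bi₀ i s) ≤
      t * F ba₁ bi₁ + (1 - t) * F ba₀ bi₀ := by
  -- trivial endpoints
  rcases eq_or_lt_of_le ht₀ with h0 | h0
  · have e1 : (fun a x => t * ba₁ a x + (1 - t) * ba₀ a x) = ba₀ := by
      funext a x; rw [← h0]; ring
    have e2 : (fun i s => t * bi₁ i s + (1 - t) * bi₀ i s) = bi₀ := by
      funext i s; rw [← h0]; ring
    rw [e1, e2, ← h0]; simp
  rcases eq_or_lt_of_le ht₁ with h1 | h1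
  · have e1 : (fun a x => t * ba₁ a x + (1 - t) * ba₀ a x) = ba₁ := by
      funext a x; rw [h1]; ring
    have e2 : (fun i s => t * bi₁ i s + (1 - t) * bi₀ i s) = bi₁ := by
      funext i s; rw [h1]; ring
    rw [e1, e2, h1]; simp
  -- main case 0 < t < 1
  -- decomposition of the counting numbers
  have hdec : ∀ (u : A → ℝ) (v : V → ℝ),
      ∑ a, cA a * u a + ∑ i, cV i * v i
      = (∑ a, caa a * u a) + (∑ i, cii i * v i)
        + ∑ a, ∑ i ∈ N a, cia i a * (u a - v i) := by
    intro u v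
    have hswap : (∑ a, ∑ i ∈ N a, cia i a * v i) = ∑ i, ∑ a ∈ M i, cia i a * v i :=
      Finset.sum_comm' (fun a i => by simp [hNM a i])
    calc ∑ a, cA a * u a + ∑ i, cV i * v i
        = ∑ a, (caa a * u a + ∑ i ∈ N a, cia i a * u a)
          + ∑ i, (cii i * v i - ∑ a ∈ M i, cia i a * v i) := by
          simp only [hcA, hcV]; congr 1
          · exact Finset.sum_congr rfl fun a _ => by rw [add_mul, Finset.sum_mul]
          · exact Finset.sum_congr rfl fun i _ => by rw [sub_mul, Finset.sum_mul]
      _ = (∑ a, caa a * u a) + (∑ i, cii i * v i)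
          + ((∑ a, ∑ i ∈ N a, cia i a * u a) - ∑ i, ∑ a ∈ M i, cia i a * v i) := by
          rw [Finset.sum_add_distrib, Finset.sum_sub_distrib]; ring
      _ = (∑ a, caa a * u a) + (∑ i, cii i * v i)
          + ∑ a, ∑ i ∈ N a, cia i a * (u a - v i) := by
          rw [← hswap, ← Finset.sum_sub_distrib]
          congr 1
          refine Finset.sum_congr rfl fun a _ => ?_
          rw [← Finset.sum_sub_distrib]
          exact Finset.sum_congr rfl fun i _ => by ring
  -- per-factor entropy convexity
  have hGa : ∀ a, (∑ x, (t * ba₁ a x + (1 - t) * ba₀ a x)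
        * Real.log (t * ba₁ a x + (1 - t) * ba₀ a x))
      ≤ t * (∑ x, ba₁ a x * Real.log (ba₁ a x))
        + (1 - t) * (∑ x, ba₀ a x * Real.log (ba₀ a x)) := by
    intro a
    rw [Finset.mul_sum, Finset.mul_sum, ← Finset.sum_add_distrib]
    exact Finset.sum_le_sum fun x _ =>
      mullog_conv (le_of_lt (hpos₁a a x)) (le_of_lt (hpos₀a a x)) ht₀ ht₁
  have hGi : ∀ i, (∑ s, (t * bi₁ i s + (1 - t) * bi₀ i s)
        * Real.log (t * bi₁ i s + (1 - t) * bi₀ i s))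
      ≤ t * (∑ s, bi₁ i s * Real.log (bi₁ i s))
        + (1 - t) * (∑ s, bi₀ i s * Real.log (bi₀ i s)) := by
    intro i
    rw [Finset.mul_sum, Finset.mul_sum, ← Finset.sum_add_distrib]
    exact Finset.sum_le_sum fun s _ =>
      mullog_conv (le_of_lt (hpos₁i i s)) (le_of_lt (hpos₀i i s)) ht₀ ht₁
  -- conditional entropy convexity
  have hfib : ∀ (i : V) (b : (V → S) → ℝ) (bv : S → ℝ),
      (∀ s', bv s' = ∑ x ∈ Finset.univ.filter (fun x => x i = s'), b x) →
      (∑ x, b x * Real.log (b x)) - (∑ s', bv s' * Real.log (bv s'))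
      = ∑ s', ∑ x ∈ Finset.univ.filter (fun x => x i = s'),
          (b x * Real.log (b x) - b x * Real.log (bv s')) := by
    intro i b bv hbv
    rw [← Finset.sum_fiberwise_of_maps_to (g := fun x => x i)
      (fun x _ => Finset.mem_univ (x i)) (fun x => b x * Real.log (b x)),
      ← Finset.sum_sub_distrib]
    refine Finset.sum_congr rfl fun s' _ => ?_
    rw [Finset.sum_sub_distrib]
    congr 1
    rw [hbv s', Finset.sum_mul]
  have hGia : ∀ a, ∀ i ∈ N a,
      ((∑ x, (t * ba₁ a x + (1 - t) * ba₀ a x)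
          * Real.log (t * ba₁ a x + (1 - t) * ba₀ a x))
        - ∑ s, (t * bi₁ i s + (1 - t) * bi₀ i s)
            * Real.log (t * bi₁ i s + (1 - t) * bi₀ i s))
      ≤ t * ((∑ x, ba₁ a x * Real.log (ba₁ a x))
            - ∑ s, bi₁ i s * Real.log (bi₁ i s))
        + (1 - t) * ((∑ x, ba₀ a x * Real.log (ba₀ a x))
            - ∑ s, bi₀ i s * Real.log (bi₀ i s)) := by
    intro a i hi
    have hmargm : ∀ s', t * bi₁ i s' + (1 - t) * bi₀ i s'
        = ∑ x ∈ Finset.univ.filter (fun x => x i = s'),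
            (t * ba₁ a x + (1 - t) * ba₀ a x) := by
      intro s'
      rw [hmarg₁ a i hi s', hmarg₀ a i hi s', Finset.mul_sum, Finset.mul_sum,
        ← Finset.sum_add_distrib]
    rw [hfib i _ _ hmargm, hfib i _ _ (hmarg₁ a i hi), hfib i _ _ (hmarg₀ a i hi)]
    rw [Finset.mul_sum, Finset.mul_sum, ← Finset.sum_add_distrib]
    refine Finset.sum_le_sum fun s' _ => ?_
    rw [Finset.mul_sum, Finset.mul_sum, ← Finset.sum_add_distrib]
    refine Finset.sum_le_sum fun x _ => ?_
    exact key_ineq (hpos₁a a x) (hpos₀a a x) (hpos₁i i s') (hpos₀i i s') h0 h1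
  -- linear part
  have hL : (∑ a, ∑ x, (t * ba₁ a x + (1 - t) * ba₀ a x) * Real.log (f a x))
      = t * (∑ a, ∑ x, ba₁ a x * Real.log (f a x))
        + (1 - t) * (∑ a, ∑ x, ba₀ a x * Real.log (f a x)) := by
    simp only [Finset.mul_sum, ← Finset.sum_add_distrib]
    refine Finset.sum_congr rfl fun a _ => Finset.sum_congr rfl fun x _ => by ring
  -- combine the entropy parts
  have hX : (∑ a, cA a * (∑ x, (t * ba₁ a x + (1 - t) * ba₀ a x)
          * Real.log (t * ba₁ a x + (1 - t) * ba₀ a x)))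
        + (∑ i, cV i * (∑ s, (t * bi₁ i s + (1 - t) * bi₀ i s)
          * Real.log (t * bi₁ i s + (1 - t) * bi₀ i s)))
      ≤ t * ((∑ a, cA a * (∑ x, ba₁ a x * Real.log (ba₁ a x)))
          + ∑ i, cV i * (∑ s, bi₁ i s * Real.log (bi₁ i s)))
        + (1 - t) * ((∑ a, cA a * (∑ x, ba₀ a x * Real.log (ba₀ a x)))
          + ∑ i, cV i * (∑ s, bi₀ i s * Real.log (bi₀ i s))) := by
    rw [hdec, hdec, hdec]
    have hA : (∑ a, caa a * (∑ x, (t * ba₁ a x + (1 - t) * ba₀ a x)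
          * Real.log (t * ba₁ a x + (1 - t) * ba₀ a x)))
        ≤ t * (∑ a, caa a * (∑ x, ba₁ a x * Real.log (ba₁ a x)))
          + (1 - t) * (∑ a, caa a * (∑ x, ba₀ a x * Real.log (ba₀ a x))) := by
      rw [Finset.mul_sum, Finset.mul_sum, ← Finset.sum_add_distrib]
      refine Finset.sum_le_sum fun a _ => ?_
      refine le_trans (mul_le_mul_of_nonneg_left (hGa a) (hcaa a)) (le_of_eq (by ring))
    have hB : (∑ i, cii i * (∑ s, (t * bi₁ i s + (1 - t) * bi₀ i s)
          * Real.log (t * bi₁ i s + (1 - t) * bi₀ i s)))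
        ≤ t * (∑ i, cii i * (∑ s, bi₁ i s * Real.log (bi₁ i s)))
          + (1 - t) * (∑ i, cii i * (∑ s, bi₀ i s * Real.log (bi₀ i s))) := by
      rw [Finset.mul_sum, Finset.mul_sum, ← Finset.sum_add_distrib]
      refine Finset.sum_le_sum fun i _ => ?_
      refine le_trans (mul_le_mul_of_nonneg_left (hGi i) (hcii i)) (le_of_eq (by ring))
    have hC : (∑ a, ∑ i ∈ N a, cia i a
          * ((∑ x, (t * ba₁ a x + (1 - t) * ba₀ a x)
              * Real.log (t * ba₁ a x + (1 - t) * ba₀ a x))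
            - ∑ s, (t * bi₁ i s + (1 - t) * bi₀ i s)
              * Real.log (t * bi₁ i s + (1 - t) * bi₀ i s)))
        ≤ t * (∑ a, ∑ i ∈ N a, cia i a * ((∑ x, ba₁ a x * Real.log (ba₁ a x))
              - ∑ s, bi₁ i s * Real.log (bi₁ i s)))
          + (1 - t) * (∑ a, ∑ i ∈ N a, cia i a * ((∑ x, ba₀ a x * Real.log (ba₀ a x))
              - ∑ s, bi₀ i s * Real.log (bi₀ i s))) := by
      rw [Finset.mul_sum, Finset.mul_sum, ← Finset.sum_add_distrib]
      refine Finset.sum_le_sum fun a _ => ?_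
      rw [Finset.mul_sum, Finset.mul_sum, ← Finset.sum_add_distrib]
      refine Finset.sum_le_sum fun i hi => ?_
      refine le_trans (mul_le_mul_of_nonneg_left (hGia a i hi) (hcia i a)) (le_of_eq (by ring))
    nlinarith [hA, hB, hC]
  rw [hF, hF, hF]
  beta_reduce
  simp only [mul_neg, Finset.sum_neg_distrib, sub_neg_eq_add]
  rw [hL]
  nlinarith [hX]
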